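/- Let m ∈ ℕ, m ≥ 1, and let F : (0,1] → ℂ be a bounded function that is constant on each interval (1/(k+1), 1/k] for every k ∈ ℕ, and satisfies F(x) = −1 for all x ∈ (1/m, 1]. Then for every complex s with Re s > 0, s·∫_0^1 (F(x)+1)·x^{s−1} dx = Σ_{k=m}^∞ F(1/k)·[1/k^s − 1/(k+1)^s] + 1/m^s, the series on the right being absolutely convergent. -/

import Mathlib

open MeasureTheory

open intervalIntegral Filter

noncomputable def auxE (s : ℂ) (k : ℕ) : ℂ := 1 / ((k : ℕ) : ℂ) ^ s

noncomputable def auxR (σ : ℝ) (k : ℕ) : ℝ := (1 / (k : ℝ)) ^ σ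

lemma aux_cast (k : ℕ) (s : ℂ) :
    ((1/(k:ℝ) : ℝ) : ℂ) ^ s = 1 / ((k:ℕ) : ℂ) ^ s := by
  push_cast
  rw [one_div, Complex.inv_cpow, one_div]
  rw [Complex.natCast_arg]
  exact Real.pi_ne_zero.symm

lemma aux_int (s : ℂ) (hs : 0 < s.re) (k : ℕ) :
    ∫ x in (1/((k:ℝ)+1))..(1/(k:ℝ)), (x:ℂ)^(s-1)
      = (auxE s k - auxE s (k+1))/s := by
  rw [integral_cpow (Or.inl (by simpa using hs))]
  have h1 : (1/((k:ℝ)+1) : ℝ) = 1/(((k+1:ℕ)):ℝ) := by push_cast; ring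
  rw [h1, sub_add_cancel, aux_cast k s, aux_cast (k+1) s]
  rfl

lemma aux_int_r (σ : ℝ) (hσ : 0 < σ) (k : ℕ) :
    ∫ x in (1/((k:ℝ)+1))..(1/(k:ℝ)), x^(σ-1)
      = (auxR σ k - auxR σ (k+1))/σ := by
  rw [integral_rpow (Or.inl (by simpa using hσ))]
  rw [sub_add_cancel]
  have h1 : (1/((k:ℝ)+1) : ℝ) = 1/(((k+1:ℕ)):ℝ) := by push_cast; ring
  rw [h1]
  rfl

lemma aux_union (m : ℕ) (hm : 1 ≤ m) :
    (⋃ j : ℕ, Set.Ioc (1/(((m+j+1:ℕ)):ℝ)) (1/(((m+j:ℕ)):ℝ))) = Set.Ioc 0 (1/(m:ℝ)) := by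
  ext x
  simp only [Set.mem_iUnion, Set.mem_Ioc]
  constructor
  · rintro ⟨j, h1, h2⟩
    have hp : (0:ℝ) < 1/(((m+j+1:ℕ)):ℝ) := by positivity
    refine ⟨hp.trans h1, h2.trans ?_⟩
    apply one_div_le_one_div_of_le
    · exact_mod_cast Nat.pos_of_ne_zero (by omega)
    · exact_mod_cast Nat.le_add_right m j
  · rintro ⟨hx0, hx1⟩
    set n := Nat.floor (1/x) with hn
    have hxinv : (0:ℝ) < 1/x := by positivity
    have hmn : (m:ℝ) ≤ 1/x := by
      have := one_div_le_one_div_of_le hx0 hx1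
      rwa [one_div_one_div] at this
    have hmn' : m ≤ n := Nat.le_floor hmn
    refine ⟨n - m, ?_, ?_⟩
    · have h : m + (n - m) + 1 = n + 1 := by omega
      rw [h]
      have := Nat.lt_floor_add_one (1/x)
      have h2 := one_div_lt_one_div_of_lt hxinv (by exact_mod_cast this)
      rw [one_div_one_div] at h2; exact_mod_cast h2
    · have h : m + (n - m) = n := by omega
      rw [h]
      have hfl : (n:ℝ) ≤ 1/x := Nat.floor_le hxinv.le
      have hn0 : (0:ℝ) < n := by exact_mod_cast Nat.lt_of_lt_of_le hm hmn'
      have := one_div_le_one_div_of_le hn0 hfl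
      rwa [one_div_one_div] at this

lemma aux_rsumm (m : ℕ) (hm : 1 ≤ m) (σ : ℝ) (hσ : 0 < σ) :
    Summable (fun j : ℕ => auxR σ (m+j) - auxR σ (m+j+1)) := by
  apply summable_of_sum_range_le (c := auxR σ m)
  · intro j
    rw [sub_nonneg]
    apply Real.rpow_le_rpow (by positivity) _ hσ.le
    apply one_div_le_one_div_of_le
    · have : 0 < m + j := by omega
      exact_mod_cast this
    · push_cast; linarith
  · intro n
    have h := Finset.sum_range_sub' (fun i => auxR σ (m+i)) n
    calc ∑ j ∈ Finset.range n, (auxR σ (m+j) - auxR σ (m+j+1))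
        = auxR σ (m+0) - auxR σ (m+n) := h
      _ ≤ auxR σ m := by
          rw [Nat.add_zero]
          exact sub_le_self _ (Real.rpow_nonneg (by positivity) _)

lemma aux_bound (s : ℂ) (hs : 0 < s.re) (k : ℕ) (hk : 1 ≤ k) :
    ‖auxE s k - auxE s (k+1)‖ ≤ (‖s‖/s.re) * (auxR s.re k - auxR s.re (k+1)) := by
  have hk0 : (0:ℝ) < 1/((k:ℝ)+1) := by positivity
  have hle : (1/((k:ℝ)+1) : ℝ) ≤ 1/(k:ℝ) := by
    apply one_div_le_one_div_of_le
    · exact_mod_cast hk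
    · linarith
  have h1 := aux_int s hs k
  have hs0 : s ≠ 0 := fun h => by simp [h] at hs
  have h2 : auxE s k - auxE s (k+1) = s * ∫ x in (1/((k:ℝ)+1))..(1/(k:ℝ)), (x:ℂ)^(s-1) := by
    rw [h1]; field_simp
  rw [h2, norm_mul]
  have h3 : ‖∫ x in (1/((k:ℝ)+1))..(1/(k:ℝ)), (x:ℂ)^(s-1)‖
      ≤ (auxR s.re k - auxR s.re (k+1))/s.re := by
    refine le_trans (intervalIntegral.norm_integral_le_integral_norm hle) ?_
    have hcg : ∫ x in (1/((k:ℝ)+1))..(1/(k:ℝ)), ‖(x:ℂ)^(s-1)‖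
        = ∫ x in (1/((k:ℝ)+1))..(1/(k:ℝ)), x^(s.re-1) := by
      apply intervalIntegral.integral_congr
      intro x hx
      rw [Set.uIcc_of_le hle] at hx
      have hx0 : 0 < x := lt_of_lt_of_le hk0 hx.1
      show ‖(x:ℂ)^(s-1)‖ = x ^ (s.re - 1)
      rw [Complex.norm_cpow_eq_rpow_re_of_pos hx0]
      norm_num
    rw [hcg, aux_int_r s.re hs k]
  calc ‖s‖ * ‖∫ x in (1/((k:ℝ)+1))..(1/(k:ℝ)), (x:ℂ)^(s-1)‖
      ≤ ‖s‖ * ((auxR s.re k - auxR s.re (k+1))/s.re) :=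
        mul_le_mul_of_nonneg_left h3 (norm_nonneg s)
    _ = (‖s‖/s.re) * (auxR s.re k - auxR s.re (k+1)) := by ring

lemma aux_esumm (m : ℕ) (hm : 1 ≤ m) (s : ℂ) (hs : 0 < s.re) :
    Summable (fun j : ℕ => ‖auxE s (m+j) - auxE s (m+j+1)‖) := by
  apply Summable.of_nonneg_of_le (fun j => norm_nonneg _)
    (fun j => aux_bound s hs (m+j) (by omega))
  exact (aux_rsumm m hm s.re hs).mul_left _

lemma aux_tend (m : ℕ) (hm : 1 ≤ m) (σ : ℝ) (hσ : 0 < σ) :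
    Tendsto (fun n : ℕ => auxR σ (m+n)) atTop (nhds 0) := by
  have h1 : Tendsto (fun n : ℕ => ((n:ℝ))^σ) atTop atTop :=
    (tendsto_rpow_atTop hσ).comp tendsto_natCast_atTop_atTop
  have h2 : Tendsto (fun n : ℕ => (m+n:ℕ)) atTop atTop :=
    tendsto_atTop_mono (fun n => Nat.le_add_left n m) tendsto_id
  have h3 := (h1.comp h2).inv_tendsto_atTop
  have heq : (fun n : ℕ => auxR σ (m+n)) = ((fun n : ℕ => ((n:ℝ))^σ) ∘ fun n : ℕ => (m+n:ℕ))⁻¹ := by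
    funext n
    simp only [Function.comp, Pi.inv_apply, auxR, one_div]
    rw [Real.inv_rpow (by positivity)]
  rw [heq]
  exact h3

lemma aux_tel (m : ℕ) (hm : 1 ≤ m) (s : ℂ) (hs : 0 < s.re) :
    HasSum (fun j : ℕ => auxE s (m+j) - auxE s (m+j+1)) (auxE s m) := by
  have hsum : Summable (fun j : ℕ => auxE s (m+j) - auxE s (m+j+1)) :=
    (aux_esumm m hm s hs).of_norm
  have h1 := hsum.hasSum.tendsto_sum_nat
  have heq : (fun n => ∑ j ∈ Finset.range n, (auxE s (m+j) - auxE s (m+j+1)))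
      = fun n => auxE s m - auxE s (m+n) := by
    funext n
    exact Finset.sum_range_sub' (fun i => auxE s (m+i)) n
  rw [heq] at h1
  have hnorm : ∀ n : ℕ, ‖auxE s (m+n)‖ = auxR s.re (m+n) := by
    intro n
    have hp : (0:ℝ) < ((m+n:ℕ):ℝ) := by
      have : 0 < m + n := by omega
      exact_mod_cast this
    rw [auxE, norm_div, norm_one, auxR]
    rw [show (((m+n:ℕ)):ℂ) = ((((m+n:ℕ)):ℝ):ℂ) by push_cast; ring]
    rw [Complex.norm_cpow_eq_rpow_re_of_pos hp]
    rw [one_div, one_div, Real.inv_rpow hp.le]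
  have htend : Tendsto (fun n : ℕ => auxE s (m+n)) atTop (nhds 0) := by
    rw [tendsto_zero_iff_norm_tendsto_zero]
    simp only [hnorm]
    exact aux_tend m hm s.re hs
  have h2 : Tendsto (fun n => auxE s m - auxE s (m+n)) atTop (nhds (auxE s m - 0)) :=
    tendsto_const_nhds.sub htend
  rw [sub_zero] at h2
  have : ∑' j : ℕ, (auxE s (m+j) - auxE s (m+j+1)) = auxE s m :=
    tendsto_nhds_unique h1 h2
  exact this ▸ hsum.hasSum

/-- For a bounded step function `F` on `(0,1]` (constant on each `(1/(k+1), 1/k]`)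
with `F ≡ -1` on `(1/m, 1]`, and `Re s > 0`:
`s ∫_0^1 (F(x)+1) x^{s-1} dx = ∑_{k=m}^∞ F(1/k)[k^{-s} - (k+1)^{-s}] + m^{-s}`,
the series being absolutely convergent. -/
theorem stmt_2 (m : ℕ) (hm : 1 ≤ m) (F : ℝ → ℂ)
    (hbdd : ∃ C : ℝ, ∀ x ∈ Set.Ioc (0:ℝ) 1, ‖F x‖ ≤ C)
    (hstep : ∀ k : ℕ, 1 ≤ k →
      ∀ x ∈ Set.Ioc (1 / ((k : ℝ) + 1)) (1 / (k : ℝ)), F x = F (1 / (k : ℝ)))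
    (hF : ∀ x ∈ Set.Ioc (1 / (m : ℝ)) (1 : ℝ), F x = -1)
    (s : ℂ) (hs : 0 < s.re) :
    Summable (fun j : ℕ =>
      ‖F (1 / ((m + j : ℕ) : ℝ)) * (1 / ((m + j : ℕ) : ℂ) ^ s - 1 / ((m + j + 1 : ℕ) : ℂ) ^ s)‖) ∧
    s * ∫ x in (0:ℝ)..1, (F x + 1) * (x : ℂ) ^ (s - 1)
      = (∑' j : ℕ,
          F (1 / ((m + j : ℕ) : ℝ)) * (1 / ((m + j : ℕ) : ℂ) ^ s - 1 / ((m + j + 1 : ℕ) : ℂ) ^ s))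
        + 1 / (m : ℂ) ^ s := by
  obtain ⟨C, hC⟩ := hbdd
  have hC0 : 0 ≤ C := le_trans (norm_nonneg _) (hC 1 (by norm_num))
  have hs0 : s ≠ 0 := fun h => by simp [h] at hs
  have hm0 : (0:ℝ) < m := by exact_mod_cast hm
  set t : ℕ → Set ℝ := fun j => Set.Ioc (1/(((m+j+1:ℕ)):ℝ)) (1/(((m+j:ℕ)):ℝ)) with ht
  set g : ℝ → ℂ := fun x => (F x + 1) * (x:ℂ)^(s-1) with hg
  have hmj0 : ∀ j : ℕ, (0:ℝ) < ((m+j:ℕ):ℝ) := fun j => by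
    have : 0 < m + j := by omega
    exact_mod_cast this
  have hle : ∀ j : ℕ, (1/(((m+j+1:ℕ)):ℝ) : ℝ) ≤ 1/(((m+j:ℕ)):ℝ) := fun j => by
    apply one_div_le_one_div_of_le (hmj0 j)
    push_cast; linarith
  have hcast : ∀ j : ℕ, ((m+j+1:ℕ):ℝ) = ((m+j:ℕ):ℝ)+1 := fun j => by push_cast; ring
  have hconst : ∀ j : ℕ, ∀ x ∈ t j, F x = F (1/(((m+j:ℕ)):ℝ)) := by
    intro j x hx
    apply hstep (m+j) (by omega)
    rwa [ht, Set.mem_Ioc, hcast j] at hx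
  -- a.e. strong measurability on each piece
  have hmeasj : ∀ j : ℕ, AEStronglyMeasurable g (volume.restrict (t j)) := by
    intro j
    have hb : AEStronglyMeasurable
        (fun x : ℝ => (F (1/(((m+j:ℕ)):ℝ)) + 1) * (x:ℂ)^(s-1)) (volume.restrict (t j)) := by
      apply ContinuousOn.aestronglyMeasurable _ measurableSet_Ioc
      apply ContinuousOn.mul continuousOn_const
      intro x hx
      have hx0 : (0:ℝ) < x := lt_of_lt_of_le (by positivity) hx.1.le
      exact (Complex.continuousAt_ofReal_cpow_const x (s-1) (Or.inr hx0.ne')).continuousWithinAt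
    apply hb.congr
    rw [Filter.EventuallyEq, ae_restrict_iff' measurableSet_Ioc]
    filter_upwards with x hx
    rw [hg]
    simp only
    rw [hconst j x hx]
  have hsub1 : (1/(m:ℝ) : ℝ) ≤ 1 := by
    rw [div_le_one hm0]; exact_mod_cast hm
  have hsetsplit : Set.Ioc (0:ℝ) 1 = Set.Ioc 0 (1/(m:ℝ)) ∪ Set.Ioc (1/(m:ℝ)) 1 :=
    (Set.Ioc_union_Ioc_eq_Ioc (by positivity) hsub1).symm
  have hzero : ∀ x ∈ Set.Ioc (1/(m:ℝ)) 1, g x = 0 := by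
    intro x hx
    rw [hg]; simp only
    rw [hF x hx]; ring
  have hg_aesm : AEStronglyMeasurable g (volume.restrict (Set.Ioc (0:ℝ) 1)) := by
    rw [hsetsplit]
    rw [aestronglyMeasurable_union_iff]
    constructor
    · rw [← aux_union m hm]
      exact aestronglyMeasurable_iUnion_iff.2 hmeasj
    · apply aestronglyMeasurable_const.congr
      rw [Filter.EventuallyEq, ae_restrict_iff' measurableSet_Ioc]
      filter_upwards with x hx
      exact (hzero x hx).symm
  -- integrability
  have hmaj : IntegrableOn (fun x : ℝ => (C+1) * x^(s.re-1)) (Set.Ioc (0:ℝ) 1) volume := by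
    have := intervalIntegrable_rpow' (a := (0:ℝ)) (b := 1) (r := s.re-1) (by linarith)
    rw [intervalIntegrable_iff_integrableOn_Ioc_of_le zero_le_one] at this
    exact this.const_mul _
  have hInt : IntegrableOn g (Set.Ioc (0:ℝ) 1) volume := by
    apply Integrable.mono' hmaj hg_aesm
    rw [ae_restrict_iff' measurableSet_Ioc]
    filter_upwards with x hx
    rw [hg]; simp only
    rw [norm_mul]
    have h1 : ‖(x:ℂ)^(s-1)‖ = x^(s.re-1) := by
      rw [Complex.norm_cpow_eq_rpow_re_of_pos hx.1]
      norm_num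
    rw [h1]
    apply mul_le_mul_of_nonneg_right _ (Real.rpow_nonneg hx.1.le _)
    calc ‖F x + 1‖ ≤ ‖F x‖ + 1 := by simpa using norm_add_le (F x) 1
      _ ≤ C + 1 := by linarith [hC x hx]
  -- value of each piece
  have hpiece : ∀ j : ℕ, ∫ x in t j, g x
      = (F (1/(((m+j:ℕ)):ℝ)) + 1) * ((auxE s (m+j) - auxE s (m+j+1))/s) := by
    intro j
    have h1 : ∫ x in t j, g x
        = ∫ x in t j, (F (1/(((m+j:ℕ)):ℝ)) + 1) * (x:ℂ)^(s-1) := by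
      apply setIntegral_congr_fun measurableSet_Ioc
      intro x hx
      rw [hg]; simp only
      rw [hconst j x hx]
    rw [h1, ht]
    simp only
    rw [← intervalIntegral.integral_of_le (hle j), hcast j,
      intervalIntegral.integral_const_mul, aux_int s hs (m+j)]
  -- summability (first goal)
  have hS2 : Summable (fun j : ℕ => ‖auxE s (m+j) - auxE s (m+j+1)‖) := aux_esumm m hm s hs
  have hgoal1 : Summable (fun j : ℕ =>
      ‖F (1 / ((m + j : ℕ) : ℝ)) * (auxE s (m+j) - auxE s (m+j+1))‖) := by
    apply Summable.of_nonneg_of_le (fun j => norm_nonneg _) _ (hS2.mul_left C)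
    intro j
    rw [norm_mul]
    apply mul_le_mul_of_nonneg_right _ (norm_nonneg _)
    apply hC
    constructor
    · positivity
    · rw [div_le_one (hmj0 j)]
      exact_mod_cast Nat.one_le_iff_ne_zero.2 (by omega)
  have hFsum : Summable (fun j : ℕ =>
      F (1 / ((m + j : ℕ) : ℝ)) * (auxE s (m+j) - auxE s (m+j+1))) := hgoal1.of_norm
  have hTel := aux_tel m hm s hs
  refine ⟨hgoal1, ?_⟩
  have hdisj : Pairwise (Function.onFun Disjoint t) := by
    intro i j hij
    have key : ∀ a b : ℕ, a < b → Disjoint (t a) (t b) := by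
      intro a b hab
      rw [ht]
      apply Set.Ioc_disjoint_Ioc.2
      refine le_trans (min_le_right _ _) (le_trans ?_ (le_max_left _ _))
      apply one_div_le_one_div_of_le
      · have : 0 < m + a + 1 := by omega
        exact_mod_cast this
      · have : m + a + 1 ≤ m + b := by omega
        exact_mod_cast this
    rcases hij.lt_or_gt with h | h
    · exact key i j h
    · exact (key j i h).symm
  have hIntU : IntegrableOn g (⋃ j, t j) volume := by
    rw [ht, aux_union m hm]
    exact hInt.mono_set (Set.Ioc_subset_Ioc_right hsub1)
  calc s * ∫ x in (0:ℝ)..1, g x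
      = s * ∫ x in Set.Ioc (0:ℝ) 1, g x := by
        rw [intervalIntegral.integral_of_le zero_le_one]
    _ = s * ∫ x in Set.Ioc (0:ℝ) (1/(m:ℝ)), g x := by
        rw [hsetsplit, setIntegral_union (Set.Ioc_disjoint_Ioc_of_le le_rfl) measurableSet_Ioc
          (hInt.mono_set (by rw [hsetsplit]; exact Set.subset_union_left))
          (hInt.mono_set (by rw [hsetsplit]; exact Set.subset_union_right))]
        have h0 : ∫ x in Set.Ioc (1/(m:ℝ)) 1, g x = 0 := by
          rw [setIntegral_congr_fun measurableSet_Ioc hzero, MeasureTheory.integral_zero]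
        rw [h0, add_zero]
    _ = s * ∑' j : ℕ, ∫ x in t j, g x := by
        rw [← aux_union m hm, integral_iUnion (fun j => measurableSet_Ioc) hdisj hIntU]
    _ = ∑' j : ℕ, (F (1/(((m+j:ℕ)):ℝ)) + 1) * (auxE s (m+j) - auxE s (m+j+1)) := by
        rw [← tsum_mul_left]
        congr 1
        funext j
        rw [hpiece j]
        field_simp
    _ = (∑' j : ℕ, F (1/(((m+j:ℕ)):ℝ)) * (auxE s (m+j) - auxE s (m+j+1)))
        + ∑' j : ℕ, (auxE s (m+j) - auxE s (m+j+1)) := by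
        rw [← Summable.tsum_add hFsum hTel.summable]
        congr 1
        funext j
        ring
    _ = (∑' j : ℕ,
          F (1 / ((m + j : ℕ) : ℝ)) * (1 / ((m + j : ℕ) : ℂ) ^ s - 1 / ((m + j + 1 : ℕ) : ℂ) ^ s))
        + 1 / (m : ℂ) ^ s := by
        rw [hTel.tsum_eq]
        rfl
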